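/- Let ρ : [0,∞) → ℝ be the Dickman function, i.e., the unique continuous function with ρ(u) = 1 for 0 ≤ u ≤ 1 that is differentiable on (1,∞) and satisfies u·ρ′(u) = −ρ(u−1) for all u > 1. Then for all integers 1 ≤ m ≤ n, ρ(n/m) ≤ ν(n,m) ≤ ρ((n+1)/(m+1)). -/

import Mathlib

open Finset

/-- The number of cycles of length `j` in the permutation `σ` of `{1,…,n}`
(fixed points count as cycles of length 1): the number of points whose
orbit under `σ` has size `j`, divided by `j`. -/
noncomputable def cycleCount {n : ℕ} (σ : Equiv.Perm (Fin n)) (j : ℕ) : ℕ :=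
  (Finset.univ.filter fun x => Function.minimalPeriod (⇑σ) x = j).card / j

/-- The number of cycles of `σ` whose length lies in the set `I`. -/
noncomputable def cycleCountIn {n : ℕ} (σ : Equiv.Perm (Fin n)) (I : Finset ℕ) : ℕ :=
  ∑ j ∈ I, cycleCount σ j

/-- The total number of cycles of `σ` (fixed points included as 1-cycles). -/
noncomputable def totalCycles {n : ℕ} (σ : Equiv.Perm (Fin n)) : ℕ :=
  cycleCountIn σ (Finset.Icc 1 n)

/-- Probability of an event under a uniformly random permutation of `{1,…,n}`. -/
noncomputable def permP (n : ℕ) (E : Equiv.Perm (Fin n) → Prop) : ℝ :=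
  (Nat.card {σ : Equiv.Perm (Fin n) // E σ} : ℝ) / n.factorial

/-- Expectation of `f` under a uniformly random permutation of `{1,…,n}`. -/
noncomputable def permE (n : ℕ) (f : Equiv.Perm (Fin n) → ℝ) : ℝ :=
  (∑ σ : Equiv.Perm (Fin n), f σ) / n.factorial

/-- `H(I) = ∑_{j ∈ I} 1/j`. -/
noncomputable def Hset (I : Finset ℕ) : ℝ := ∑ j ∈ I, (1 : ℝ) / j

/-- The harmonic sum `H_n = ∑_{i=1}^n 1/i`. -/
noncomputable def harm (n : ℕ) : ℝ := Hset (Finset.Icc 1 n)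


open Finset Function Equiv

/-- A permutation is `m`-good if every point has minimal period at most `m`. -/
def IsGood (m : ℕ) {α : Type*} (σ : Equiv.Perm α) : Prop :=
  ∀ x, Function.minimalPeriod (⇑σ) x ≤ m

noncomputable def goodCount (n m : ℕ) : ℕ :=
  Nat.card {σ : Equiv.Perm (Fin n) // IsGood m σ}

section basic
variable {α : Type*} [Fintype α]

lemma perm_mem_periodicPts (σ : Equiv.Perm α) (x : α) : x ∈ periodicPts (⇑σ) := by
  refine ⟨orderOf σ, orderOf_pos σ, ?_⟩
  unfold IsPeriodicPt IsFixedPt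
  rw [Equiv.Perm.iterate_eq_pow, pow_orderOf_eq_one]
  rfl

lemma mp_pos (σ : Equiv.Perm α) (x : α) : 0 < minimalPeriod (⇑σ) x :=
  minimalPeriod_pos_of_mem_periodicPts (perm_mem_periodicPts σ x)

lemma mp_le_card (σ : Equiv.Perm α) (x : α) :
    minimalPeriod (⇑σ) x ≤ Fintype.card α := by
  classical
  have h : Set.InjOn (fun i => (⇑σ)^[i] x) (Set.Iio (minimalPeriod (⇑σ) x)) :=
    iterate_injOn_Iio_minimalPeriod
  calc minimalPeriod (⇑σ) x = (Finset.range (minimalPeriod (⇑σ) x)).card := by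
        simp
    _ ≤ Finset.univ.card := by
        apply Finset.card_le_card_of_injOn (fun i => (⇑σ)^[i] x)
        · intro i _; exact Finset.mem_univ _
        · intro a ha b hb hab
          exact h (by simpa using ha) (by simpa using hb) hab
    _ = Fintype.card α := rfl

end basic

lemma minimalPeriod_permCongr {α β : Type*} (e : α ≃ β) (σ : Equiv.Perm α) (x : α) :
    minimalPeriod (⇑(e.permCongr σ)) (e x) = minimalPeriod (⇑σ) x := by
  have key : ∀ n : ℕ, (⇑(e.permCongr σ))^[n] (e x) = e ((⇑σ)^[n] x) := by
    intro n
    induction n with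
    | zero => simp
    | succ n ih => rw [Function.iterate_succ_apply', Function.iterate_succ_apply', ih]; simp
  rw [Function.minimalPeriod_eq_minimalPeriod_iff]
  intro n
  unfold Function.IsPeriodicPt Function.IsFixedPt
  rw [key]
  exact ⟨fun h => e.injective h, fun h => by rw [h]⟩

lemma isGood_permCongr_iff {α β : Type*} (e : α ≃ β) (σ : Equiv.Perm α) (m : ℕ) :
    IsGood m (e.permCongr σ) ↔ IsGood m σ := by
  constructor
  · intro h x
    have := h (e x); rwa [minimalPeriod_permCongr] at this
  · intro h y
    have := h (e.symm y)
    rw [← minimalPeriod_permCongr e] at this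
    simpa using this

lemma card_isGood_eq_goodCount {β : Type*} [Fintype β] (m : ℕ) :
    Nat.card {σ : Equiv.Perm β // IsGood m σ} = goodCount (Fintype.card β) m := by
  classical
  refine Nat.card_congr (Equiv.subtypeEquiv ((Fintype.equivFin β).permCongr) ?_)
  intro σ
  exact (isGood_permCongr_iff _ _ _).symm

lemma goodCount_eq_factorial {n m : ℕ} (h : n ≤ m) : goodCount n m = n.factorial := by
  have : ∀ σ : Equiv.Perm (Fin n), IsGood m σ := by
    intro σ x
    exact le_trans (le_trans (mp_le_card σ x) (by simp)) h
  unfold goodCount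
  rw [Nat.card_congr (Equiv.subtypeUnivEquiv this), Nat.card_eq_fintype_card]
  simp [Fintype.card_perm]

/-- `σ` realizes the list `l` as a cycle. -/
def Cyc {α : Type*} (l : List α) (σ : Equiv.Perm α) : Prop :=
  ∀ (i : ℕ) (h : i < l.length),
    σ (l[i]'h) = l[(i + 1) % l.length]'(Nat.mod_lt _ ((Nat.zero_le _).trans_lt h))

section fiber

variable {α : Type*} [Fintype α] [DecidableEq α] {m : ℕ} {l : List α}
set_option linter.unusedSectionVars false

lemma Cyc.mem_iff {σ : Equiv.Perm α} (hσ : Cyc l σ) {x : α} :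
    x ∈ l ↔ σ x ∈ l := by
  constructor
  · intro hx
    obtain ⟨i, hi, rfl⟩ := List.getElem_of_mem hx
    rw [hσ i hi]
    exact List.getElem_mem _
  · intro hx
    have himg : l.toFinset.image σ = l.toFinset := by
      apply Finset.eq_of_subset_of_card_le
      · intro y hy
        obtain ⟨z, hz, rfl⟩ := Finset.mem_image.mp hy
        rw [List.mem_toFinset] at hz ⊢
        obtain ⟨i, hi, rfl⟩ := List.getElem_of_mem hz
        rw [hσ i hi]
        exact List.getElem_mem _
      · rw [Finset.card_image_of_injective _ σ.injective]
    have : σ x ∈ l.toFinset.image σ := by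
      rw [himg, List.mem_toFinset]; exact hx
    obtain ⟨z, hz, hzx⟩ := Finset.mem_image.mp this
    rw [← σ.injective hzx]
    exact List.mem_toFinset.mp hz

lemma Cyc.not_mem_iff {σ : Equiv.Perm α} (hσ : Cyc l σ) :
    ∀ x, (σ x ∉ l) ↔ (x ∉ l) := fun _ => not_iff_not.mpr hσ.mem_iff.symm

lemma mp_subtypePerm {p : α → Prop} (σ : Equiv.Perm α) (h : ∀ x, p (σ x) ↔ p x)
    (x : α) (hx : p x) :
    Function.minimalPeriod (⇑(σ.subtypePerm h)) ⟨x, hx⟩ = Function.minimalPeriod (⇑σ) x := by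
  rw [Function.minimalPeriod_eq_minimalPeriod_iff]
  intro n
  unfold Function.IsPeriodicPt Function.IsFixedPt
  simp [Subtype.ext_iff, Equiv.Perm.iterate_eq_pow, Equiv.Perm.subtypePerm_pow]

/-- Restriction of a good `l`-cycle permutation to the complement of `l`. -/
lemma isGood_subtypePerm {σ : Equiv.Perm α} (hg : IsGood m σ) (hσ : Cyc l σ) :
    IsGood m (σ.subtypePerm (p := fun x => x ∉ l) hσ.not_mem_iff) := by
  rintro ⟨x, hx⟩
  rw [mp_subtypePerm]
  exact hg x

/-- iterates of `formPerm l * ofSubtype τ` at points of `l`. -/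
lemma iter_mul_getElem (hl : l.Nodup) (τ : Equiv.Perm {x : α // x ∉ l}) (n : ℕ)
    (i : ℕ) (h : i < l.length) :
    (⇑(l.formPerm * Equiv.Perm.ofSubtype τ))^[n] (l[i]'h)
      = l[(i + n) % l.length]'(Nat.mod_lt _ ((Nat.zero_le _).trans_lt h)) := by
  induction n with
  | zero => simp [Nat.mod_eq_of_lt h]
  | succ n ih =>
    rw [Function.iterate_succ_apply', ih]
    have hk : (i + n) % l.length < l.length := Nat.mod_lt _ ((Nat.zero_le _).trans_lt h)
    have hmem : l[(i + n) % l.length]'hk ∈ l := List.getElem_mem _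
    rw [Equiv.Perm.mul_apply, Equiv.Perm.ofSubtype_apply_of_not_mem τ (by simpa using hmem),
      List.formPerm_apply_getElem _ hl]
    congr 1
    rw [Nat.mod_add_mod, Nat.add_assoc]

end fiber

section fiber2
variable {α : Type*} [Fintype α] [DecidableEq α] {m : ℕ} {l : List α}
set_option linter.unusedSectionVars false

/-- iterates of `formPerm l * ofSubtype τ` at points not in `l`. -/
lemma iter_mul_not_mem (τ : Equiv.Perm {x : α // x ∉ l}) (n : ℕ) {x : α} (hx : x ∉ l) :
    (⇑(l.formPerm * Equiv.Perm.ofSubtype τ))^[n] x = ((τ ^ n) ⟨x, hx⟩ : {x : α // x ∉ l}) := by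
  induction n with
  | zero => simp
  | succ n ih =>
    rw [Function.iterate_succ_apply', ih, Equiv.Perm.mul_apply,
      Equiv.Perm.ofSubtype_apply_of_mem τ ((τ ^ n) ⟨x, hx⟩).2,
      List.formPerm_apply_of_notMem (τ _).2]
    rw [pow_succ', Equiv.Perm.mul_apply]

lemma cyc_mul (hl : l.Nodup) (τ : Equiv.Perm {x : α // x ∉ l}) :
    Cyc l (l.formPerm * Equiv.Perm.ofSubtype τ) := by
  intro i h
  have := iter_mul_getElem hl τ 1 i h
  simpa using this

lemma isGood_mul (hl : l.Nodup) (hlen : 1 ≤ l.length) (hlm : l.length ≤ m)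
    (τ : Equiv.Perm {x : α // x ∉ l}) (hτ : IsGood m τ) :
    IsGood m (l.formPerm * Equiv.Perm.ofSubtype τ) := by
  intro x
  by_cases hx : x ∈ l
  · obtain ⟨i, hi, rfl⟩ := List.getElem_of_mem hx
    have hper : Function.IsPeriodicPt (⇑(l.formPerm * Equiv.Perm.ofSubtype τ)) l.length
        (l[i]'hi) := by
      unfold Function.IsPeriodicPt Function.IsFixedPt
      rw [iter_mul_getElem hl τ l.length i hi]
      simp [Nat.add_mod_right, Nat.mod_eq_of_lt hi]
    have := hper.minimalPeriod_le (by omega)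
    exact this.trans hlm
  · have key : Function.minimalPeriod (⇑(l.formPerm * Equiv.Perm.ofSubtype τ)) x
        = Function.minimalPeriod (⇑τ) ⟨x, hx⟩ := by
      rw [Function.minimalPeriod_eq_minimalPeriod_iff]
      intro n
      unfold Function.IsPeriodicPt Function.IsFixedPt
      rw [iter_mul_not_mem τ n hx]
      simp [Subtype.ext_iff, Equiv.Perm.iterate_eq_pow]
    rw [key]
    exact hτ _

/-- The key bijection: good permutations realizing `l` as a cycle correspond to
good permutations of the complement of `l`. -/
noncomputable def fiberEquiv (hl : l.Nodup) (hlen : 1 ≤ l.length) (hlm : l.length ≤ m) :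
    {σ : Equiv.Perm α // IsGood m σ ∧ Cyc l σ} ≃
      {τ : Equiv.Perm {x : α // x ∉ l} // IsGood m τ} where
  toFun σp := ⟨σp.1.subtypePerm σp.2.2.not_mem_iff, isGood_subtypePerm σp.2.1 σp.2.2⟩
  invFun τp := ⟨l.formPerm * Equiv.Perm.ofSubtype τp.1,
    isGood_mul hl hlen hlm τp.1 τp.2, cyc_mul hl τp.1⟩
  left_inv := by
    rintro ⟨σ, hg, hc⟩
    ext x
    simp only [Equiv.Perm.mul_apply]
    by_cases hx : x ∈ l
    · rw [Equiv.Perm.ofSubtype_apply_of_not_mem _ (by simpa using hx)]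
      obtain ⟨i, hi, rfl⟩ := List.getElem_of_mem hx
      rw [List.formPerm_apply_getElem _ hl, hc i hi]
    · rw [Equiv.Perm.ofSubtype_apply_of_mem (σ.subtypePerm hc.not_mem_iff) hx, Equiv.Perm.subtypePerm_apply,
        List.formPerm_apply_of_notMem (by exact (hc.not_mem_iff x).mpr hx)]
  right_inv := by
    rintro ⟨τ, hτ⟩
    ext x
    simp only [Equiv.Perm.subtypePerm_apply, Equiv.Perm.mul_apply]
    rw [Equiv.Perm.ofSubtype_apply_of_mem τ x.2,
      List.formPerm_apply_of_notMem (τ ⟨x.1, x.2⟩).2]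

end fiber2

lemma getElem_congr_idx' {α : Type*} {l : List α} {i k : ℕ} (h : i < l.length) (hik : i = k) :
    l[i]'h = l[k]'(hik ▸ h) := by subst hik; rfl

lemma cyc_iff {α : Type*} [DecidableEq α] [Fintype α] (σ : Equiv.Perm α) {j : ℕ} (hj1 : 1 ≤ j)
    (x₀ : α) (w : Fin (j - 1) → α) (hl : (x₀ :: List.ofFn w).Nodup)
    (hmp_pos : 0 < Function.minimalPeriod (⇑σ) x₀) :
    (Function.minimalPeriod (⇑σ) x₀ = j ∧ ∀ i : Fin (j - 1), (⇑σ)^[(i : ℕ) + 1] x₀ = w i)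
      ↔ Cyc (x₀ :: List.ofFn w) σ := by
  set l : List α := x₀ :: List.ofFn w with hldef
  have hlen : l.length = j := by simp [hldef]; omega
  have hlpos : 0 < l.length := by omega
  constructor
  · rintro ⟨hmp, hFw⟩
    have hiter : ∀ (i : ℕ) (h : i < l.length), (⇑σ)^[i] x₀ = l[i]'h := by
      intro i h
      match i with
      | 0 => simp [hldef]
      | (k+1) =>
        have hk : k < j - 1 := by omega
        have := hFw ⟨k, hk⟩
        simp only [hldef, List.getElem_cons_succ, List.getElem_ofFn]
        exact this
    intro i h
    rw [← hiter i h]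
    have hstep : σ ((⇑σ)^[i] x₀) = (⇑σ)^[i+1] x₀ := (Function.iterate_succ_apply' _ _ _).symm
    rw [hstep]
    by_cases hij : i + 1 < l.length
    · rw [hiter (i+1) hij]
      exact getElem_congr_idx' hij (by rw [Nat.mod_eq_of_lt hij])
    · have hie : i + 1 = j := by omega
      have : (⇑σ)^[i+1] x₀ = x₀ := by
        rw [hie, ← hmp]; exact Function.iterate_minimalPeriod
      rw [this]
      have h0 : (i + 1) % l.length = 0 := by rw [hlen, hie, Nat.mod_self]
      rw [getElem_congr_idx' (Nat.mod_lt _ ((Nat.zero_le _).trans_lt h)) h0]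
      simp [hldef]
  · intro hc
    have hiter2 : ∀ nn : ℕ, (⇑σ)^[nn] x₀ = l[nn % l.length]'(Nat.mod_lt _ hlpos) := by
      intro nn
      induction nn with
      | zero => simp [hldef]
      | succ k ih =>
        rw [Function.iterate_succ_apply', ih, hc (k % l.length) (Nat.mod_lt _ hlpos)]
        exact getElem_congr_idx' _ (by rw [Nat.mod_add_mod])
    have hper : Function.IsPeriodicPt (⇑σ) j x₀ := by
      unfold Function.IsPeriodicPt Function.IsFixedPt
      rw [hiter2 j]
      rw [getElem_congr_idx' _ (by rw [hlen, Nat.mod_self])]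
      simp [hldef]
    have hdvd := hper.minimalPeriod_dvd
    have hle : Function.minimalPeriod (⇑σ) x₀ ≤ j := Nat.le_of_dvd (by omega) hdvd
    have hmp : Function.minimalPeriod (⇑σ) x₀ = j := by
      rcases lt_or_eq_of_le hle with hlt | heq
      · exfalso
        have h1 : (⇑σ)^[Function.minimalPeriod (⇑σ) x₀] x₀ = x₀ :=
          Function.iterate_minimalPeriod
        rw [hiter2 _] at h1
        have hmodlt : Function.minimalPeriod (⇑σ) x₀ % l.length
            = Function.minimalPeriod (⇑σ) x₀ := Nat.mod_eq_of_lt (by omega)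
        rw [getElem_congr_idx' _ hmodlt] at h1
        have hx0 : l[0]'hlpos = x₀ := by simp [hldef]
        have h1' : l[Function.minimalPeriod (⇑σ) x₀]'(by omega) = l[0]'hlpos := by
          rw [h1, hx0]
        have := (List.Nodup.getElem_inj_iff hl).mp h1'
        omega
      · exact heq
    refine ⟨hmp, fun i => ?_⟩
    have hilt : (i : ℕ) + 1 < l.length := by have := i.isLt; omega
    rw [hiter2 ((i : ℕ) + 1), getElem_congr_idx' _ (Nat.mod_eq_of_lt hilt)]
    simp [hldef]
section counting
variable {α : Type*} [Fintype α] [DecidableEq α]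

lemma card_good_cyc (m : ℕ) (l : List α) (hl : l.Nodup) (hlen : 1 ≤ l.length)
    (hlm : l.length ≤ m) :
    Nat.card {σ : Equiv.Perm α // IsGood m σ ∧ Cyc l σ}
      = goodCount (Fintype.card α - l.length) m := by
  rw [Nat.card_congr (fiberEquiv hl hlen hlm), card_isGood_eq_goodCount]
  congr 1
  have h1 : Fintype.card {x : α // x ∈ l} = l.length := by
    rw [Fintype.card_of_subtype l.toFinset (fun x => List.mem_toFinset),
      List.toFinset_card_of_nodup hl]
  have := Fintype.card_subtype_compl (fun x : α => x ∈ l)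
  rw [this, h1]

lemma card_W {n j : ℕ} (x₀ : Fin n) :
    (Finset.univ.filter fun w : Fin j → Fin n =>
       Function.Injective w ∧ ∀ i, w i ≠ x₀).card = (n - 1).descFactorial j := by
  classical
  rw [← Fintype.card_subtype]
  have e : {w : Fin j → Fin n // Function.Injective w ∧ ∀ i, w i ≠ x₀}
      ≃ (Fin j ↪ {y : Fin n // y ≠ x₀}) :=
    { toFun := fun wp => ⟨fun i => ⟨wp.1 i, wp.2.2 i⟩,
        fun a b h => wp.2.1 (congrArg Subtype.val h)⟩
      invFun := fun f => ⟨fun i => (f i).1,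
        ⟨fun a b h => f.injective (Subtype.ext h), fun i => (f i).2⟩⟩
      left_inv := fun wp => rfl
      right_inv := fun f => rfl }
  rw [Fintype.card_congr e, Fintype.card_embedding_eq]
  have hcard : Fintype.card {y : Fin n // y ≠ x₀} = n - 1 := by
    have := Fintype.card_subtype_compl (fun y : Fin n => y = x₀)
    rw [Fintype.card_subtype_eq] at this
    simpa using this
  rw [hcard]
  simp

end counting

lemma goodCount_rec (n m : ℕ) (hn : 1 ≤ n) (hm : 1 ≤ m) :
    goodCount n m
      = ∑ j ∈ Finset.Icc 1 (min m n), (n - 1).descFactorial (j - 1) * goodCount (n - j) m := by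
  classical
  have hx : (0 : ℕ) < n := hn
  set x₀ : Fin n := ⟨0, hx⟩ with hx₀
  rw [goodCount, Nat.card_eq_fintype_card, Fintype.card_subtype]
  rw [Finset.card_eq_sum_card_fiberwise (f := fun σ : Equiv.Perm (Fin n) =>
      Function.minimalPeriod (⇑σ) x₀) (t := Finset.Icc 1 (min m n))
      (fun σ hσ => by
        rw [Finset.mem_coe, Finset.mem_filter] at hσ
        rw [Finset.mem_coe, Finset.mem_Icc]
        exact ⟨mp_pos σ x₀, le_min (hσ.2 x₀)
          ((mp_le_card σ x₀).trans (by simp))⟩)]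
  refine Finset.sum_congr rfl ?_
  intro j hj
  rw [Finset.mem_Icc] at hj
  obtain ⟨hj1, hjmn⟩ := hj
  have hjm : j ≤ m := hjmn.trans (min_le_left _ _)
  have hjn : j ≤ n := hjmn.trans (min_le_right _ _)
  set W : Finset (Fin (j - 1) → Fin n) :=
    Finset.univ.filter (fun w => Function.Injective w ∧ ∀ i, w i ≠ x₀) with hW
  set F : Equiv.Perm (Fin n) → (Fin (j - 1) → Fin n) :=
    fun σ i => (⇑σ)^[(i : ℕ) + 1] x₀ with hF
  have ontoW : ∀ σ ∈ (Finset.univ.filter fun σ : Equiv.Perm (Fin n) => IsGood m σ).filter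
      (fun σ : Equiv.Perm (Fin n) => Function.minimalPeriod (⇑σ) x₀ = j), F σ ∈ W := by
    intro σ hσ
    simp only [Finset.mem_filter, Finset.mem_univ, true_and] at hσ
    obtain ⟨hg, hmp⟩ := hσ
    have hinj : Set.InjOn (fun i => (⇑σ)^[i] x₀) (Set.Iio j) := by
      rw [← hmp]; exact Function.iterate_injOn_Iio_minimalPeriod
    rw [hW, Finset.mem_filter]
    refine ⟨Finset.mem_univ _, ?_, ?_⟩
    · intro a b hab
      have ha : (a : ℕ) + 1 ∈ Set.Iio j := by have := a.isLt; simp; omega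
      have hb : (b : ℕ) + 1 ∈ Set.Iio j := by have := b.isLt; simp; omega
      have := hinj ha hb hab
      ext; omega
    · intro i hi
      have h0 : (0 : ℕ) ∈ Set.Iio j := by simp; omega
      have hi1 : (i : ℕ) + 1 ∈ Set.Iio j := by have := i.isLt; simp; omega
      have := hinj hi1 h0 (by rw [hF] at hi; exact hi)
      omega
  rw [Finset.card_eq_sum_card_fiberwise ontoW]
  have hfiber : ∀ w ∈ W,
      (((Finset.univ.filter fun σ : Equiv.Perm (Fin n) => IsGood m σ).filter
        (fun σ : Equiv.Perm (Fin n) => Function.minimalPeriod (⇑σ) x₀ = j)).filter (fun σ => F σ = w)).card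
      = goodCount (n - j) m := by
    intro w hw
    rw [hW, Finset.mem_filter] at hw
    obtain ⟨-, winj, wne⟩ := hw
    have hlnd : (x₀ :: List.ofFn w).Nodup := by
      refine List.nodup_cons.mpr ⟨?_, List.nodup_ofFn.mpr winj⟩
      rw [List.mem_ofFn]
      rintro ⟨i, hi⟩
      exact wne i hi
    have hll : (x₀ :: List.ofFn w).length = j := by simp; omega
    have hseteq : ((Finset.univ.filter fun σ : Equiv.Perm (Fin n) => IsGood m σ).filter
        (fun σ : Equiv.Perm (Fin n) => Function.minimalPeriod (⇑σ) x₀ = j)).filter (fun σ => F σ = w)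
        = Finset.univ.filter (fun σ => IsGood m σ ∧ Cyc (x₀ :: List.ofFn w) σ) := by
      ext σ
      simp only [Finset.mem_filter, Finset.mem_univ, true_and]
      constructor
      · rintro ⟨⟨hg, hmp⟩, hFw⟩
        refine ⟨hg, (cyc_iff σ hj1 x₀ w hlnd (mp_pos σ x₀)).mp ⟨hmp, fun i => ?_⟩⟩
        rw [hF] at hFw
        exact congrFun hFw i
      · rintro ⟨hg, hcyc⟩
        obtain ⟨hmp, hFw⟩ := (cyc_iff σ hj1 x₀ w hlnd (mp_pos σ x₀)).mpr hcyc
        exact ⟨⟨hg, hmp⟩, funext hFw⟩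
    rw [hseteq, ← Fintype.card_subtype, ← Nat.card_eq_fintype_card,
      card_good_cyc m _ hlnd (by omega) (by omega)]
    congr 1
    rw [hll]
    simp
  rw [Finset.sum_congr rfl hfiber, Finset.sum_const, smul_eq_mul]
  congr 1
  exact card_W x₀

open intervalIntegral MeasureTheory

section analysis
variable {rho : ℝ → ℝ}

noncomputable def Phi (rho : ℝ → ℝ) (u : ℝ) : ℝ := ∫ t in (0:ℝ)..u, rho t

lemma rho_intInt (hcont : ContinuousOn rho (Set.Ici 0)) {a b : ℝ} (ha : 0 ≤ a) (hb : 0 ≤ b) :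
    IntervalIntegrable rho MeasureTheory.volume a b := by
  apply ContinuousOn.intervalIntegrable
  apply hcont.mono
  intro x hx
  rcases Set.mem_uIcc.mp hx with h | h
  · exact le_trans ha h.1
  · exact le_trans hb h.1

lemma Phi_hasDeriv (hcont : ContinuousOn rho (Set.Ici 0)) {u : ℝ} (hu : 0 < u) :
    HasDerivAt (Phi rho) (rho u) u := by
  have hca : ContinuousAt rho u := hcont.continuousAt (Ici_mem_nhds hu)
  exact integral_hasDerivAt_right (rho_intInt hcont le_rfl hu.le)
    (ContinuousOn.stronglyMeasurableAtFilter isOpen_Ioi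
      (hcont.mono Set.Ioi_subset_Ici_self) u hu) hca

lemma Phi_sub (hcont : ContinuousOn rho (Set.Ici 0)) {a b : ℝ} (ha : 0 ≤ a) (hb : 0 ≤ b) :
    Phi rho b - Phi rho a = ∫ t in a..b, rho t :=
  integral_interval_sub_left (rho_intInt hcont le_rfl hb) (rho_intInt hcont le_rfl ha)

lemma Phi_contOn (hcont : ContinuousOn rho (Set.Ici 0)) {M : ℝ} (hM : 0 ≤ M) :
    ContinuousOn (Phi rho) (Set.Icc 0 M) := by
  have h := continuousOn_primitive_interval
    (f := rho) (μ := MeasureTheory.volume) (a := (0:ℝ)) (b := M) ?hint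
  · rwa [Set.uIcc_of_le hM] at h
  · rw [Set.uIcc_of_le hM]
    exact (hcont.mono (fun x hx => hx.1)).integrableOn_Icc

lemma Phi_int01 (hcont : ContinuousOn rho (Set.Ici 0))
    (hone : ∀ u : ℝ, 0 ≤ u → u ≤ 1 → rho u = 1) : Phi rho 1 - Phi rho 0 = 1 := by
  rw [Phi_sub hcont le_rfl zero_le_one]
  have : ∫ t in (0:ℝ)..1, rho t = ∫ _t in (0:ℝ)..1, (1:ℝ) := by
    apply integral_congr
    intro t ht
    rw [Set.uIcc_of_le zero_le_one] at ht
    exact hone t ht.1 ht.2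
  rw [this, intervalIntegral.integral_const]
  norm_num

lemma rho_key (hcont : ContinuousOn rho (Set.Ici 0))
    (hone : ∀ u : ℝ, 0 ≤ u → u ≤ 1 → rho u = 1)
    (hder : ∀ u : ℝ, 1 < u → HasDerivAt rho (-rho (u - 1) / u) u)
    {u : ℝ} (hu : 1 ≤ u) : u * rho u = ∫ t in (u-1)..u, rho t := by
  set g : ℝ → ℝ := fun v => v * rho v - (Phi rho v - Phi rho (v - 1)) with hg
  have hg1 : g 1 = 0 := by
    simp only [hg, one_mul]
    rw [hone 1 zero_le_one le_rfl, show (1:ℝ) - 1 = 0 by norm_num]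
    linarith [Phi_int01 hcont hone]
  have hgu : g u = 0 := by
    rcases eq_or_lt_of_le hu with heq | hlt
    · rw [← heq]; exact hg1
    · have hgd : ∀ v ∈ Set.Ioo (1:ℝ) u, HasDerivAt g 0 v := by
        intro v hv
        have hv1 : (1:ℝ) < v := hv.1
        have hv0 : (0:ℝ) < v := by linarith
        have h1 : HasDerivAt (fun w => w * rho w) (1 * rho v + v * (-rho (v - 1) / v)) v :=
          (hasDerivAt_id v).mul (hder v hv1)
        have h2 : HasDerivAt (Phi rho) (rho v) v := Phi_hasDeriv hcont hv0
        have h3 : HasDerivAt (fun w => Phi rho (w - 1)) (rho (v - 1) * 1) v := by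
          exact (Phi_hasDeriv hcont (by linarith : (0:ℝ) < v - 1)).comp v
            ((hasDerivAt_id v).sub_const 1)
        have total := h1.sub (h2.sub h3)
        exact total.congr_deriv (by rw [mul_div_cancel₀ _ hv0.ne']; ring)
      have hgc : ContinuousOn g (Set.Icc 1 u) := by
        apply ContinuousOn.sub
        · exact continuousOn_id.mul (hcont.mono (fun x hx => le_trans zero_le_one hx.1))
        · apply ContinuousOn.sub
          · exact (Phi_contOn hcont (by linarith : (0:ℝ) ≤ u)).mono
              (fun x hx => ⟨le_trans zero_le_one hx.1, hx.2⟩)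
          · apply (Phi_contOn hcont (by linarith : (0:ℝ) ≤ u - 1)).comp
              ((continuousOn_id.sub continuousOn_const))
            intro x hx
            exact ⟨by simp; linarith [hx.1], by simp; linarith [hx.2]⟩
      have hdiff : DifferentiableOn ℝ g (interior (Set.Icc 1 u)) := by
        rw [interior_Icc]
        intro v hv
        exact (hgd v hv).differentiableAt.differentiableWithinAt
      have hd0 : ∀ v ∈ interior (Set.Icc 1 u), deriv g v = 0 := by
        rw [interior_Icc]
        intro v hv
        exact (hgd v hv).deriv
      have hmono := monotoneOn_of_deriv_nonneg (convex_Icc 1 u) hgc hdiff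
        (fun v hv => le_of_eq (hd0 v hv).symm)
      have hanti := antitoneOn_of_deriv_nonpos (convex_Icc 1 u) hgc hdiff
        (fun v hv => le_of_eq (hd0 v hv))
      have h1m : (1:ℝ) ∈ Set.Icc 1 u := ⟨le_rfl, hu⟩
      have hum : u ∈ Set.Icc 1 u := ⟨hu, le_rfl⟩
      have := hmono h1m hum hu
      have := hanti h1m hum hu
      linarith [hg1]
  have := Phi_sub hcont (by linarith : (0:ℝ) ≤ u - 1) (by linarith : (0:ℝ) ≤ u)
  rw [hg] at hgu
  simp only at hgu
  linarith



lemma rho_anti_aux (hcont : ContinuousOn rho (Set.Ici 0))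
    (hone : ∀ u : ℝ, 0 ≤ u → u ≤ 1 → rho u = 1)
    (hder : ∀ u : ℝ, 1 < u → HasDerivAt rho (-rho (u - 1) / u) u) :
    ∀ k : ℕ, (∀ u ∈ Set.Icc (0:ℝ) (k+1), 0 ≤ rho u) ∧ AntitoneOn rho (Set.Icc (0:ℝ) (k+1)) := by
  intro k
  induction k with
  | zero =>
    constructor
    · intro u hu
      rw [hone u hu.1 (by simpa using hu.2)]
      norm_num
    · intro x hx y hy hxy
      rw [hone x hx.1 (by simpa using hx.2), hone y hy.1 (by simpa using hy.2)]
  | succ k ih =>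
    obtain ⟨hnn, hanti⟩ := ih
    have hanti1 : AntitoneOn rho (Set.Icc (1:ℝ) (k+1+1)) := by
      apply antitoneOn_of_deriv_nonpos (convex_Icc _ _)
        (hcont.mono (fun x hx => le_trans zero_le_one hx.1))
      · rw [interior_Icc]
        intro v hv
        exact (hder v hv.1).differentiableAt.differentiableWithinAt
      · rw [interior_Icc]
        intro v hv
        rw [(hder v hv.1).deriv]
        have h1 : 0 ≤ rho (v - 1) := by
          apply hnn
          constructor <;> push_cast <;> [linarith [hv.1]; linarith [hv.2]]
        have hv0 : (0:ℝ) < v := by linarith [hv.1]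
        rw [div_nonpos_iff]
        right
        exact ⟨by linarith, hv0.le⟩
    have hantiS : AntitoneOn rho (Set.Icc (0:ℝ) (k+1+1)) := by
      intro x hx y hy hxy
      by_cases hy1 : y ≤ 1
      · rw [hone x hx.1 (le_trans hxy hy1), hone y hy.1 hy1]
      · push_neg at hy1
        by_cases hx1 : 1 ≤ x
        · exact hanti1 ⟨hx1, hx.2⟩ ⟨hy1.le, hy.2⟩ hxy
        · push_neg at hx1
          rw [hone x hx.1 hx1.le, ← hone 1 zero_le_one le_rfl]
          exact hanti1 ⟨le_rfl, by push_cast; linarith⟩ ⟨hy1.le, hy.2⟩ hy1.le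
    refine ⟨?_, by push_cast at hantiS ⊢; exact hantiS⟩
    intro u hu
    by_cases huk : u ≤ k + 1
    · exact hnn u ⟨hu.1, huk⟩
    · push_neg at huk
      have hu1 : (1:ℝ) < u := by push_cast at huk; linarith [Nat.cast_nonneg (α := ℝ) k]
      have hkey := rho_key hcont hone hder hu1.le
      have hint : ∫ t in (u-1)..u, rho t ≥ (u - (u-1)) * rho u := by
        have hmono := intervalIntegral.integral_mono_on (by linarith : u - 1 ≤ u)
          intervalIntegrable_const (rho_intInt hcont (by linarith) (by linarith))
          (fun t ht => hantiS ⟨by linarith [ht.1], le_trans ht.2 (by push_cast at hu ⊢; linarith [hu.2])⟩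
            ⟨by linarith, by push_cast at hu ⊢; linarith [hu.2]⟩ ht.2)
        rw [intervalIntegral.integral_const, smul_eq_mul] at hmono
        exact hmono
      have : u * rho u ≥ rho u := by
        rw [hkey]
        have : u - (u - 1) = 1 := by ring
        rw [this, one_mul] at hint
        exact hint
      nlinarith [hu1]

lemma rho_nonneg (hcont : ContinuousOn rho (Set.Ici 0))
    (hone : ∀ u : ℝ, 0 ≤ u → u ≤ 1 → rho u = 1)
    (hder : ∀ u : ℝ, 1 < u → HasDerivAt rho (-rho (u - 1) / u) u)
    {u : ℝ} (hu : 0 ≤ u) : 0 ≤ rho u := by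
  obtain ⟨hnn, -⟩ := rho_anti_aux hcont hone hder ⌈u⌉₊
  exact hnn u ⟨hu, by linarith [Nat.le_ceil u, (by norm_num : (0:ℝ) ≤ 1)]⟩

lemma rho_anti (hcont : ContinuousOn rho (Set.Ici 0))
    (hone : ∀ u : ℝ, 0 ≤ u → u ≤ 1 → rho u = 1)
    (hder : ∀ u : ℝ, 1 < u → HasDerivAt rho (-rho (u - 1) / u) u)
    {x y : ℝ} (hx : 0 ≤ x) (hxy : x ≤ y) : rho y ≤ rho x := by
  obtain ⟨-, hanti⟩ := rho_anti_aux hcont hone hder ⌈y⌉₊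
  exact hanti ⟨hx, by linarith [Nat.le_ceil y]⟩ ⟨by linarith, by linarith [Nat.le_ceil y]⟩ hxy

lemma int_le_const (hcont : ContinuousOn rho (Set.Ici 0))
    (hone : ∀ u : ℝ, 0 ≤ u → u ≤ 1 → rho u = 1)
    (hder : ∀ u : ℝ, 1 < u → HasDerivAt rho (-rho (u - 1) / u) u)
    {a b : ℝ} (ha : 0 ≤ a) (hab : a ≤ b) :
    ∫ t in a..b, rho t ≤ (b - a) * rho a := by
  have hmono := intervalIntegral.integral_mono_on hab
    (rho_intInt hcont ha (by linarith)) intervalIntegrable_const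
    (fun t ht => rho_anti hcont hone hder ha ht.1)
  rw [intervalIntegral.integral_const, smul_eq_mul] at hmono
  exact hmono

lemma const_le_int (hcont : ContinuousOn rho (Set.Ici 0))
    (hone : ∀ u : ℝ, 0 ≤ u → u ≤ 1 → rho u = 1)
    (hder : ∀ u : ℝ, 1 < u → HasDerivAt rho (-rho (u - 1) / u) u)
    {a b : ℝ} (ha : 0 ≤ a) (hab : a ≤ b) :
    (b - a) * rho b ≤ ∫ t in a..b, rho t := by
  have hmono := intervalIntegral.integral_mono_on hab
    intervalIntegrable_const (rho_intInt hcont ha (by linarith))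
    (fun t ht => rho_anti hcont hone hder (by linarith [ht.1]) ht.2)
  rw [intervalIntegral.integral_const, smul_eq_mul] at hmono
  exact hmono

end analysis

noncomputable def nu (m n : ℕ) : ℝ := (goodCount n m : ℝ) / (n.factorial : ℝ)

lemma nu_rec {m : ℕ} (hm : 1 ≤ m) {n : ℕ} (hn : m < n) :
    (n : ℝ) * nu m n = ∑ j ∈ Finset.Icc 1 m, nu m (n - j) := by
  have hrec := goodCount_rec n m (by omega) hm
  rw [min_eq_left hn.le] at hrec
  have hcast : (goodCount n m : ℝ)
      = ∑ j ∈ Finset.Icc 1 m, ((n - 1).descFactorial (j - 1) : ℝ) * (goodCount (n - j) m : ℝ) := by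
    rw [hrec]; push_cast; ring
  unfold nu
  rw [hcast, Finset.sum_div, Finset.mul_sum]
  refine Finset.sum_congr rfl ?_
  intro j hj
  rw [Finset.mem_Icc] at hj
  have hfacn : ((n : ℝ)) * ((n - 1).factorial : ℝ) = (n.factorial : ℝ) := by
    exact_mod_cast congrArg Nat.cast (Nat.mul_factorial_pred (by omega : n ≠ 0))
  have hfacd : ((n - j).factorial : ℝ) * ((n - 1).descFactorial (j - 1) : ℝ)
      = ((n - 1).factorial : ℝ) := by
    have h1 : n - j = (n - 1) - (j - 1) := by omega
    rw [h1]
    exact_mod_cast congrArg Nat.cast (Nat.factorial_mul_descFactorial (by omega : j - 1 ≤ n - 1))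
  have h2 : ((n - j).factorial : ℝ) ≠ 0 := Nat.cast_ne_zero.mpr (Nat.factorial_ne_zero _)
  have h3 : ((n - 1).descFactorial (j - 1) : ℝ) ≠ 0 := by
    intro h0
    rw [h0, mul_zero] at hfacd
    exact Nat.cast_ne_zero.mpr (Nat.factorial_ne_zero (n-1)) hfacd.symm
  have hn0 : ((n : ℝ)) ≠ 0 := by
    have : 0 < n := by omega
    exact_mod_cast Nat.pos_iff_ne_zero.mp this
  rw [← hfacn, ← hfacd]
  field_simp

section main

variable {rho : ℝ → ℝ}
  (hcont : ContinuousOn rho (Set.Ici 0))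
  (hone : ∀ u : ℝ, 0 ≤ u → u ≤ 1 → rho u = 1)
  (hder : ∀ u : ℝ, 1 < u → HasDerivAt rho (-rho (u - 1) / u) u)
include hcont hone hder

lemma main_bounds {m : ℕ} (hm : 1 ≤ m) :
    ∀ n : ℕ, rho ((n : ℝ) / m) ≤ nu m n ∧ nu m n ≤ rho (((n : ℝ) + 1) / ((m : ℝ) + 1)) := by
  have hM : (0:ℝ) < m := by exact_mod_cast hm
  intro n
  induction n using Nat.strong_induction_on with
  | _ n IH =>
  by_cases hnm : n ≤ m
  · have hnu : nu m n = 1 := by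
      unfold nu
      rw [goodCount_eq_factorial hnm]
      have := Nat.factorial_ne_zero n
      field_simp
    have hdiv0 : (0:ℝ) ≤ (n : ℝ) / m := by positivity
    constructor
    · rw [hnu, ← hone 0 le_rfl zero_le_one]
      exact rho_anti hcont hone hder le_rfl hdiv0
    · rw [hnu, hone (((n : ℝ) + 1) / ((m : ℝ) + 1)) (by positivity) ?hle]
      rw [div_le_one (by positivity)]
      have : (n:ℝ) ≤ m := by exact_mod_cast hnm
      linarith
  · push_neg at hnm
    have hN : (0:ℝ) < n := by exact_mod_cast (by omega : 0 < n)
    have hMN : (m:ℝ) < n := by exact_mod_cast hnm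
    have hrec := nu_rec hm hnm
    have hcastnj : ∀ j ∈ Finset.Icc 1 m, ((n - j : ℕ) : ℝ) = (n:ℝ) - (j:ℝ) := by
      intro j hj
      rw [Finset.mem_Icc] at hj
      have : j ≤ n := by omega
      push_cast [Nat.cast_sub this]
      ring
    have hM1 : (0:ℝ) < (m:ℝ) + 1 := by linarith
    constructor
    -- LOWER BOUND
    · have hterm : ∀ j ∈ Finset.Icc 1 m, rho (((n:ℝ) - j) / m) ≤ nu m (n - j) := by
        intro j hj
        have hjm := Finset.mem_Icc.mp hj
        have := (IH (n - j) (by omega)).1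
        rwa [hcastnj j hj] at this
      have hpiece : ∀ j ∈ Finset.Icc 1 m,
          (m:ℝ) * (Phi rho (((n:ℝ) - j + 1) / m) - Phi rho (((n:ℝ) - j) / m))
            ≤ rho (((n:ℝ) - j) / m) := by
        intro j hj
        have hjm := Finset.mem_Icc.mp hj
        have hj1 : (1:ℝ) ≤ (j:ℝ) := by exact_mod_cast hjm.1
        have hjmr : (j:ℝ) ≤ (m:ℝ) := by exact_mod_cast hjm.2
        have ha : (0:ℝ) ≤ ((n:ℝ) - j) / m := by
          apply div_nonneg _ hM.le; linarith
        have hab : ((n:ℝ) - j) / m ≤ ((n:ℝ) - j + 1) / m := by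
          apply (div_le_div_iff_of_pos_right hM).mpr; linarith
        rw [Phi_sub hcont ha (le_trans ha hab)]
        have hint := int_le_const hcont hone hder ha hab
        have hlen : ((n:ℝ) - j + 1) / m - ((n:ℝ) - j) / m = 1 / m := by
          rw [div_sub_div_same]; norm_num
        rw [hlen] at hint
        calc (m:ℝ) * ∫ t in (((n:ℝ) - j) / m)..(((n:ℝ) - j + 1) / m), rho t
            ≤ (m:ℝ) * (1 / m * rho (((n:ℝ) - j) / m)) :=
              mul_le_mul_of_nonneg_left hint hM.le
          _ = rho (((n:ℝ) - j) / m) := by field_simp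
      set f : ℕ → ℝ := fun i => Phi rho (((n:ℝ) - i) / m) with hf
      have htel : ∑ j ∈ Finset.Icc 1 m, (f (j - 1) - f j) = f 0 - f m := by
        rw [← Finset.Ico_add_one_right_eq_Icc, Finset.sum_Ico_eq_sum_range]
        have hmm : m + 1 - 1 = m := rfl
        rw [hmm]
        have heq : ∀ i, f (1 + i - 1) - f (1 + i) = f i - f (i + 1) := by
          intro i
          have e1 : 1 + i - 1 = i := by omega
          have e2 : 1 + i = i + 1 := by omega
          rw [e1, e2]
        rw [Finset.sum_congr rfl (fun i _ => heq i), Finset.sum_range_sub' f]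
      have hfj : ∀ j ∈ Finset.Icc 1 m,
          f (j - 1) - f j
            = Phi rho (((n:ℝ) - j + 1) / m) - Phi rho (((n:ℝ) - j) / m) := by
        intro j hj
        have hjm := Finset.mem_Icc.mp hj
        have harg : ((n:ℝ) - ((j - 1 : ℕ) : ℝ)) = (n:ℝ) - j + 1 := by
          push_cast [Nat.cast_sub hjm.1]; ring
        simp only [hf]
        rw [harg]
      have hsum1 : ∑ j ∈ Finset.Icc 1 m,
          (m:ℝ) * (Phi rho (((n:ℝ) - j + 1) / m) - Phi rho (((n:ℝ) - j) / m))
          = (m:ℝ) * (f 0 - f m) := by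
        rw [← Finset.mul_sum]
        congr 1
        rw [← htel]
        exact Finset.sum_congr rfl (fun j hj => (hfj j hj).symm)
      have hkey : (m:ℝ) * (f 0 - f m) = (n:ℝ) * rho ((n:ℝ) / m) := by
        have hu1 : (1:ℝ) ≤ (n:ℝ) / m := by
          rw [le_div_iff₀ hM]; linarith
        have hid := rho_key hcont hone hder hu1
        have hsub : Phi rho ((n:ℝ)/m) - Phi rho ((n:ℝ)/m - 1)
            = ∫ t in ((n:ℝ)/m - 1)..((n:ℝ)/m), rho t :=
          Phi_sub hcont (by linarith) (by linarith)
        have hf0 : f 0 = Phi rho ((n:ℝ)/m) := by simp only [hf]; norm_num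
        have hfm : f m = Phi rho ((n:ℝ)/m - 1) := by
          simp only [hf]
          congr 1
          field_simp
        rw [hf0, hfm, hsub, ← hid]
        field_simp
      have hstep : (n:ℝ) * rho ((n:ℝ)/m) ≤ (n:ℝ) * nu m n := by
        rw [hrec, ← hkey, ← hsum1]
        calc ∑ j ∈ Finset.Icc 1 m,
            (m:ℝ) * (Phi rho (((n:ℝ) - j + 1) / m) - Phi rho (((n:ℝ) - j) / m))
            ≤ ∑ j ∈ Finset.Icc 1 m, rho (((n:ℝ) - j) / m) := Finset.sum_le_sum hpiece
          _ ≤ ∑ j ∈ Finset.Icc 1 m, nu m (n - j) := Finset.sum_le_sum hterm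
      exact le_of_mul_le_mul_left hstep hN
    -- UPPER BOUND
    · have hterm : ∀ j ∈ Finset.Icc 1 m, nu m (n - j) ≤ rho (((n:ℝ) - j + 1) / ((m:ℝ) + 1)) := by
        intro j hj
        have := (IH (n - j) (by rw [Finset.mem_Icc] at hj; omega)).2
        rwa [hcastnj j hj] at this
      have hpiece : ∀ j ∈ Finset.Icc 1 m,
          rho (((n:ℝ) - j + 1) / ((m:ℝ) + 1))
            ≤ ((m:ℝ) + 1) * (Phi rho (((n:ℝ) - j + 1) / ((m:ℝ)+1))
                - Phi rho (((n:ℝ) - j) / ((m:ℝ)+1))) := by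
        intro j hj
        have hjm := Finset.mem_Icc.mp hj
        have hj1 : (1:ℝ) ≤ (j:ℝ) := by exact_mod_cast hjm.1
        have hjmr : (j:ℝ) ≤ (m:ℝ) := by exact_mod_cast hjm.2
        have ha : (0:ℝ) ≤ ((n:ℝ) - j) / ((m:ℝ)+1) := by
          apply div_nonneg _ hM1.le; linarith
        have hab : ((n:ℝ) - j) / ((m:ℝ)+1) ≤ ((n:ℝ) - j + 1) / ((m:ℝ)+1) := by
          apply (div_le_div_iff_of_pos_right hM1).mpr; linarith
        rw [Phi_sub hcont ha (le_trans ha hab)]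
        have hint := const_le_int hcont hone hder ha hab
        have hlen : ((n:ℝ) - j + 1) / ((m:ℝ)+1) - ((n:ℝ) - j) / ((m:ℝ)+1) = 1 / ((m:ℝ)+1) := by
          rw [div_sub_div_same]; norm_num
        rw [hlen] at hint
        calc rho (((n:ℝ) - j + 1) / ((m:ℝ)+1))
            = ((m:ℝ)+1) * (1 / ((m:ℝ)+1) * rho (((n:ℝ) - j + 1) / ((m:ℝ)+1))) := by
              field_simp
          _ ≤ ((m:ℝ)+1) * ∫ t in (((n:ℝ) - j) / ((m:ℝ)+1))..(((n:ℝ) - j + 1) / ((m:ℝ)+1)), rho t :=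
              mul_le_mul_of_nonneg_left hint hM1.le
      set f : ℕ → ℝ := fun i => Phi rho (((n:ℝ) - i) / ((m:ℝ)+1)) with hf
      have htel : ∑ j ∈ Finset.Icc 1 m, (f (j - 1) - f j) = f 0 - f m := by
        rw [← Finset.Ico_add_one_right_eq_Icc, Finset.sum_Ico_eq_sum_range]
        have hmm : m + 1 - 1 = m := rfl
        rw [hmm]
        have heq : ∀ i, f (1 + i - 1) - f (1 + i) = f i - f (i + 1) := by
          intro i
          have e1 : 1 + i - 1 = i := by omega
          have e2 : 1 + i = i + 1 := by omega
          rw [e1, e2]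
        rw [Finset.sum_congr rfl (fun i _ => heq i), Finset.sum_range_sub' f]
      have hfj : ∀ j ∈ Finset.Icc 1 m,
          f (j - 1) - f j
            = Phi rho (((n:ℝ) - j + 1) / ((m:ℝ)+1)) - Phi rho (((n:ℝ) - j) / ((m:ℝ)+1)) := by
        intro j hj
        have hjm := Finset.mem_Icc.mp hj
        have harg : ((n:ℝ) - ((j - 1 : ℕ) : ℝ)) = (n:ℝ) - j + 1 := by
          push_cast [Nat.cast_sub hjm.1]; ring
        simp only [hf]
        rw [harg]
      set v : ℝ := ((n:ℝ) + 1) / ((m:ℝ) + 1) with hv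
      have hv1 : (1:ℝ) ≤ v := by
        rw [hv, le_div_iff₀ hM1]; linarith
      have hsum2 : ∑ j ∈ Finset.Icc 1 m,
          ((m:ℝ)+1) * (Phi rho (((n:ℝ) - j + 1) / ((m:ℝ)+1))
            - Phi rho (((n:ℝ) - j) / ((m:ℝ)+1)))
          = ((m:ℝ)+1) * (f 0 - f m) := by
        rw [← Finset.mul_sum]
        congr 1
        rw [← htel]
        exact Finset.sum_congr rfl (fun j hj => (hfj j hj).symm)
      have hendpoint : ((m:ℝ)+1) * (f 0 - f m) ≤ (n:ℝ) * rho v := by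
        have hf0 : f 0 = Phi rho ((n:ℝ)/((m:ℝ)+1)) := by simp only [hf]; norm_num
        have hfm : f m = Phi rho (v - 1) := by
          simp only [hf, hv]
          congr 1
          field_simp
          ring
        have hid := rho_key hcont hone hder hv1
        have hsub1 : Phi rho v - Phi rho (v - 1) = ∫ t in (v-1)..v, rho t :=
          Phi_sub hcont (by linarith) (by linarith)
        have hnv : (0:ℝ) ≤ (n:ℝ)/((m:ℝ)+1) := by positivity
        have hnvv : (n:ℝ)/((m:ℝ)+1) ≤ v := by
          rw [hv]
          apply (div_le_div_iff_of_pos_right hM1).mpr; linarith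
        have hsub2 : Phi rho v - Phi rho ((n:ℝ)/((m:ℝ)+1))
            = ∫ t in ((n:ℝ)/((m:ℝ)+1))..v, rho t := Phi_sub hcont hnv (by linarith)
        have hlow := const_le_int hcont hone hder hnv hnvv
        have hvd : v - (n:ℝ)/((m:ℝ)+1) = 1/((m:ℝ)+1) := by
          rw [hv, div_sub_div_same]; norm_num
        rw [hvd] at hlow
        have hexpand : ((m:ℝ)+1) * (f 0 - f m)
            = ((m:ℝ)+1) * (Phi rho v - Phi rho (v-1))
              - ((m:ℝ)+1) * (Phi rho v - Phi rho ((n:ℝ)/((m:ℝ)+1))) := by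
          rw [hf0, hfm]; ring
        rw [hexpand, hsub1, ← hid, hsub2]
        have h1 : ((m:ℝ)+1) * (v * rho v) = ((n:ℝ)+1) * rho v := by
          rw [hv]; field_simp
        have h2 : ((m:ℝ)+1) * (1/((m:ℝ)+1) * rho v) = rho v := by field_simp
        nlinarith [mul_le_mul_of_nonneg_left hlow hM1.le]
      have hstep : (n:ℝ) * nu m n ≤ (n:ℝ) * rho v := by
        rw [hrec]
        calc ∑ j ∈ Finset.Icc 1 m, nu m (n - j)
            ≤ ∑ j ∈ Finset.Icc 1 m, rho (((n:ℝ) - j + 1) / ((m:ℝ)+1)) :=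
              Finset.sum_le_sum hterm
          _ ≤ ∑ j ∈ Finset.Icc 1 m,
              ((m:ℝ)+1) * (Phi rho (((n:ℝ) - j + 1) / ((m:ℝ)+1))
                - Phi rho (((n:ℝ) - j) / ((m:ℝ)+1))) := Finset.sum_le_sum hpiece
          _ = ((m:ℝ)+1) * (f 0 - f m) := hsum2
          _ ≤ (n:ℝ) * rho v := hendpoint
      exact le_of_mul_le_mul_left hstep hN

end main

lemma filter_mp_card_ge {n : ℕ} (σ : Equiv.Perm (Fin n)) (x : Fin n) :
    Function.minimalPeriod (⇑σ) x
      ≤ (Finset.univ.filter fun y : Fin n =>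
          Function.minimalPeriod (⇑σ) y = Function.minimalPeriod (⇑σ) x).card := by
  classical
  set j := Function.minimalPeriod (⇑σ) x with hj
  have hinj : Set.InjOn (fun i => (⇑σ)^[i] x) (Set.Iio j) :=
    Function.iterate_injOn_Iio_minimalPeriod
  calc j = (Finset.range j).card := by simp
    _ ≤ _ := by
      apply Finset.card_le_card_of_injOn (fun i => (⇑σ)^[i] x)
      · intro i hi
        rw [Finset.mem_coe, Finset.mem_filter]
        refine ⟨Finset.mem_univ _, ?_⟩
        rw [hj]
        exact Function.minimalPeriod_apply_iterate (perm_mem_periodicPts σ x) i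
      · intro a ha b hb hab
        exact hinj (by simpa using ha) (by simpa using hb) hab

lemma event_iff {n m : ℕ} (σ : Equiv.Perm (Fin n)) :
    cycleCountIn σ (Finset.Icc (m + 1) n) = 0 ↔ IsGood m σ := by
  classical
  unfold cycleCountIn cycleCount
  constructor
  · intro h x
    by_contra hx
    push_neg at hx
    set j := Function.minimalPeriod (⇑σ) x with hj
    have hjn : j ≤ n := by
      have := mp_le_card σ x
      simpa using this
    have hjI : j ∈ Finset.Icc (m + 1) n := Finset.mem_Icc.mpr ⟨hx, hjn⟩
    have hzero := (Finset.sum_eq_zero_iff.mp h) j hjI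
    have hjpos : 0 < j := mp_pos σ x
    rw [Nat.div_eq_zero_iff] at hzero
    have := filter_mp_card_ge σ x
    rw [← hj] at this
    omega
  · intro hg
    apply Finset.sum_eq_zero
    intro j hjI
    rw [Finset.mem_Icc] at hjI
    have : (Finset.univ.filter fun y : Fin n => Function.minimalPeriod (⇑σ) y = j) = ∅ := by
      apply Finset.filter_eq_empty_iff.mpr
      intro y _
      have := hg y
      omega
    rw [this]
    simp

/-- **Dickman-function bounds for `ν(n,m)`.** If `ρ` is continuous on `[0,∞)`,
equals `1` on `[0,1]`, and satisfies `u ρ'(u) = -ρ(u-1)` for `u > 1` (expressed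
via `HasDerivAt`), then for all `1 ≤ m ≤ n`,
`ρ(n/m) ≤ ν(n,m) ≤ ρ((n+1)/(m+1))`. -/
theorem dickman_bounds (rho : ℝ → ℝ) (hcont : ContinuousOn rho (Set.Ici 0))
    (hone : ∀ u : ℝ, 0 ≤ u → u ≤ 1 → rho u = 1)
    (hder : ∀ u : ℝ, 1 < u → HasDerivAt rho (-rho (u - 1) / u) u)
    (n m : ℕ) (hm : 1 ≤ m) (hmn : m ≤ n) :
    rho ((n : ℝ) / m)
        ≤ permP n (fun σ => cycleCountIn σ (Finset.Icc (m + 1) n) = 0) ∧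
      permP n (fun σ => cycleCountIn σ (Finset.Icc (m + 1) n) = 0)
        ≤ rho (((n : ℝ) + 1) / ((m : ℝ) + 1)) := by
  have hcard : permP n (fun σ => cycleCountIn σ (Finset.Icc (m + 1) n) = 0) = nu m n := by
    unfold permP nu goodCount
    congr 2
    exact Nat.card_congr (Equiv.subtypeEquivRight (fun σ => event_iff σ))
  rw [hcard]
  exact ⟨(main_bounds hcont hone hder hm n).1, (main_bounds hcont hone hder hm n).2⟩
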